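/- Let X be an absolutely continuous nonnegative random variable with pdf f and cdf F with F(x) > 0 for all x > 0, and define the sequence F_1 = F, f_1 = f, T_n(x) = −log F_n(x), F_{n+1}(x) = F_n(x)(1 + T_n(x)), f_{n+1}(x) = T_n(x)·f_n(x), with reversed hazard rate τ_n(x) = f_n(x)/F_n(x). For s ∈ ℝ and an integrable function h define the operator T̃_s h(t) = ∫_0^t e^{−s(t−x)}·h(x) dx for t > 0. Then for every t > 0, every n ≥ 1 and every s ∈ ℝ: T̃_s F_{n+1}(t) = (1 + T_n(t))·T̃_s F_n(t) + ∫_0^t e^{−s(t−u)}·τ_n(u)·T̃_s F_n(u) du. -/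

import Mathlib

open MeasureTheory Set Filter

/-- The operator dual to the Dickson–Hipp operator:
`T̃_s h(t) = ∫_0^t e^{-s(t-x)} h(x) dx`. -/
noncomputable def Ttilde (s : ℝ) (h : ℝ → ℝ) (t : ℝ) : ℝ :=
  ∫ x in (0:ℝ)..t, Real.exp (-(s * (t - x))) * h x

open intervalIntegral

-- helper: interval integrable from measurability + bound on Ioc
lemma aux_II {g : ℝ → ℝ} {u C : ℝ} (hu : 0 ≤ u)
    (hm : AEStronglyMeasurable g (volume.restrict (Ioc 0 u)))
    (hb : ∀ x ∈ Ioc (0:ℝ) u, |g x| ≤ C) :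
    IntervalIntegrable g volume 0 u := by
  rw [intervalIntegrable_iff_integrableOn_Ioc_of_le hu]
  refine ⟨hm, HasFiniteIntegral.restrict_of_bounded (C := C) ?_ ?_⟩
  · simp [Real.volume_Ioc]
  · filter_upwards [ae_restrict_mem measurableSet_Ioc] with x hx
    simpa [Real.norm_eq_abs] using hb x hx

-- helper: y * (1 + -log y) ≤ 1 for 0 < y ≤ 1  (and the related -log y * y ≤ 1 - y)
lemma aux_mul_log {y : ℝ} (h0 : 0 < y) : (-Real.log y) * y ≤ 1 - y := by
  have h := Real.log_le_sub_one_of_pos (show (0:ℝ) < y⁻¹ by positivity)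
  rw [Real.log_inv] at h
  have := mul_le_mul_of_nonneg_right h h0.le
  rw [sub_mul, inv_mul_cancel₀ h0.ne'] at this
  nlinarith

lemma aux_props (F f : ℝ → ℝ) (Fn fn : ℕ → ℝ → ℝ)
    (hFcont : Continuous F) (hfcont : Continuous f)
    (hderiv : ∀ x, 0 < x → HasDerivAt F (f x) x)
    (hf : ∀ x, 0 ≤ f x)
    (hFpos : ∀ x, 0 < x → 0 < F x)
    (hFle : ∀ x, F x ≤ 1)
    (hF1 : ∀ x, Fn 1 x = F x)
    (hf1 : ∀ x, fn 1 x = f x)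
    (hFrec : ∀ n, 1 ≤ n → ∀ x, Fn (n + 1) x = Fn n x * (1 + (-Real.log (Fn n x))))
    (hfrec : ∀ n, 1 ≤ n → ∀ x, fn (n + 1) x = (-Real.log (Fn n x)) * fn n x) :
    ∀ n, 1 ≤ n → Measurable (Fn n) ∧ Measurable (fn n) ∧
      (∀ x, 0 < x → HasDerivAt (Fn n) (fn n x) x) ∧
      (∀ x, 0 < x → 0 < Fn n x) ∧ (∀ x, 0 < x → Fn n x ≤ 1) ∧
      (∀ x, 0 < x → 0 ≤ fn n x) := by
  intro n hn
  induction n with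
  | zero => omega
  | succ m ih =>
    rcases Nat.lt_or_ge m 1 with hm | hm
    · -- m = 0, base case n = 1
      interval_cases m
      have hF : Fn 1 = F := funext hF1
      have hfe : fn 1 = f := funext hf1
      rw [hF, hfe]
      exact ⟨hFcont.measurable, hfcont.measurable, hderiv, hFpos,
        fun x _ => hFle x, fun x _ => hf x⟩
    · obtain ⟨hFm, hfm, hd, hpos, hle, hf0⟩ := ih hm
      have hFe : Fn (m+1) = fun x => Fn m x * (1 + -Real.log (Fn m x)) :=
        funext (hFrec m hm)
      have hfe : fn (m+1) = fun x => (-Real.log (Fn m x)) * fn m x :=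
        funext (hfrec m hm)
      rw [hFe, hfe]
      refine ⟨hFm.mul (measurable_const.add (hFm.log.neg)),
        (hFm.log.neg).mul hfm, ?_, ?_, ?_, ?_⟩
      · intro x hx
        have h1 := hd x hx
        have h2 : HasDerivAt (fun y => Real.log (Fn m y)) (fn m x / Fn m x) x :=
          h1.log (hpos x hx).ne'
        have h3 := h1.mul ((h2.neg).const_add 1)
        refine h3.congr_deriv ?_
        have hne := (hpos x hx).ne'
        simp only [Pi.neg_apply]
        field_simp
        ring
      · intro x hx
        have hlog : Real.log (Fn m x) ≤ 0 := Real.log_nonpos (hpos x hx).le (hle x hx)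
        have := hpos x hx
        show 0 < Fn m x * (1 + -Real.log (Fn m x))
        nlinarith
      · intro x hx
        have h := aux_mul_log (hpos x hx)
        show Fn m x * (1 + -Real.log (Fn m x)) ≤ 1
        nlinarith
      · intro x hx
        have hlog : Real.log (Fn m x) ≤ 0 := Real.log_nonpos (hpos x hx).le (hle x hx)
        show 0 ≤ -Real.log (Fn m x) * fn m x
        exact mul_nonneg (by linarith) (hf0 x hx)


/-- For every `t > 0`, `n ≥ 1` and `s ∈ ℝ`,
`T̃_s F_{n+1}(t) = (1 + T_n(t)) T̃_s F_n(t) + ∫_0^t e^{-s(t-u)} τ_n(u) T̃_s F_n(u) du`,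
where `τ_n = f_n/F_n` and `T_n = -log F_n`. -/
theorem Ttilde_recursion
    (F f : ℝ → ℝ) (Fn fn : ℕ → ℝ → ℝ)
    (hFcont : Continuous F) (hfcont : Continuous f)
    (hderiv : ∀ x, 0 < x → HasDerivAt F (f x) x)
    (hf : ∀ x, 0 ≤ f x)
    (hFmono : Monotone F)
    (hFpos : ∀ x, 0 < x → 0 < F x)
    (hFle : ∀ x, F x ≤ 1)
    (hF1 : ∀ x, Fn 1 x = F x)
    (hf1 : ∀ x, fn 1 x = f x)
    (hFrec : ∀ n, 1 ≤ n → ∀ x, Fn (n + 1) x = Fn n x * (1 + (-Real.log (Fn n x))))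
    (hfrec : ∀ n, 1 ≤ n → ∀ x, fn (n + 1) x = (-Real.log (Fn n x)) * fn n x) :
    ∀ t, 0 < t → ∀ n, 1 ≤ n → ∀ s : ℝ,
      Ttilde s (Fn (n + 1)) t
        = (1 + (-Real.log (Fn n t))) * Ttilde s (Fn n) t
            + ∫ u in (0:ℝ)..t,
                Real.exp (-(s * (t - u))) * ((fn n u / Fn n u) * Ttilde s (Fn n) u) := by
  intro t ht n hn s
  obtain ⟨hFm, hfm, hd, hpos, hle, hf0⟩ :=
    aux_props F f Fn fn hFcont hfcont hderiv hf hFpos hFle hF1 hf1 hFrec hfrec n hn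
  set G := Fn n with hG
  set g := fn n with hg
  set T : ℝ → ℝ := fun x => -Real.log (G x) with hT
  set M := Real.exp (|s| * t) with hM
  have hM1 : (1:ℝ) ≤ M := by
    rw [hM]; rw [show (1:ℝ) = Real.exp 0 by simp]
    exact Real.exp_le_exp.2 (by positivity)
  have hMx : ∀ x, 0 ≤ x → x ≤ t → Real.exp (s * x) ≤ M := by
    intro x hx0 hxt
    exact Real.exp_le_exp.2 (by
      calc s * x ≤ |s| * x := mul_le_mul_of_nonneg_right (le_abs_self s) hx0
        _ ≤ |s| * t := mul_le_mul_of_nonneg_left hxt (abs_nonneg s))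
  -- monotonicity of G on (0, ∞)
  have hmono : MonotoneOn G (Ioi 0) := by
    apply monotoneOn_of_deriv_nonneg (convex_Ioi 0)
    · exact fun x hx => (hd x hx).continuousAt.continuousWithinAt
    · intro x hx
      rw [interior_Ioi] at hx
      exact (hd x hx).differentiableAt.differentiableWithinAt
    · intro x hx
      rw [interior_Ioi] at hx
      rw [(hd x hx).deriv]
      exact hf0 x hx
  -- integrability of g on (0, t]
  have Ig : IntegrableOn g (Ioc 0 t) := by
    have hbdd : BddBelow (G '' Ioi 0) := ⟨0, fun y hy => by
      obtain ⟨x, hx, rfl⟩ := hy; exact (hpos x hx).le⟩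
    set L := sInf (G '' Ioi 0) with hL
    have hlim : Tendsto G (nhdsWithin 0 (Ioi 0)) (nhds L) :=
      MonotoneOn.tendsto_nhdsGT hmono hbdd
    set H : ℝ → ℝ := fun x => if x ≤ 0 then L else G x with hHdef
    have hHG : ∀ x, 0 < x → H x = G x := fun x hx => by
      simp [hHdef, not_le.2 hx]
    have hHcont : ContinuousOn H (Icc 0 t) := by
      intro x hx
      rcases eq_or_lt_of_le hx.1 with h0 | h0
      · subst h0
        have h1 : Tendsto H (nhdsWithin 0 (Ioi 0)) (nhds L) := by
          refine hlim.congr' ?_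
          filter_upwards [self_mem_nhdsWithin] with y hy
          exact (hHG y hy).symm
        have h2 : ContinuousWithinAt H (Ici 0) 0 := by
          rw [← continuousWithinAt_Ioi_iff_Ici]
          have : H 0 = L := by simp [hHdef]
          rw [ContinuousWithinAt, this]
          exact h1
        exact h2.mono (Icc_subset_Ici_self)
      · have h1 : ContinuousAt H x := by
          have : ContinuousAt G x := (hd x h0).continuousAt
          refine this.congr ?_
          filter_upwards [Ioi_mem_nhds h0] with y hy
          exact (hHG y hy).symm
        exact h1.continuousWithinAt
    have hHd : ∀ x ∈ Ioo (0:ℝ) t, HasDerivAt H (g x) x := by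
      intro x hx
      refine (hd x hx.1).congr_of_eventuallyEq ?_
      filter_upwards [Ioi_mem_nhds hx.1] with y hy
      exact hHG y hy
    exact integrableOn_deriv_of_nonneg hHcont hHd (fun x hx => hf0 x hx.1)
  -- the primitive A
  set A : ℝ → ℝ := fun u => ∫ x in (0:ℝ)..u, Real.exp (s * x) * G x with hA
  have hI1 : ∀ u, 0 ≤ u → u ≤ t →
      IntervalIntegrable (fun x => Real.exp (s * x) * G x) volume 0 u := by
    intro u hu0 hut
    refine aux_II (C := M) hu0 ((Real.continuous_exp.comp (continuous_const.mul continuous_id)).measurable.mul hFm).aestronglyMeasurable.restrict ?_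
    intro x hx
    rw [abs_mul, abs_of_pos (Real.exp_pos _), abs_of_pos (hpos x hx.1)]
    calc Real.exp (s*x) * G x ≤ M * 1 :=
          mul_le_mul (hMx x hx.1.le (hx.2.trans hut)) (hle x hx.1) (hpos x hx.1).le (by linarith)
      _ = M := mul_one M
  have hAd : ∀ u, 0 < u → u ≤ t → HasDerivAt A (Real.exp (s * u) * G u) u := by
    intro u hu0 hut
    refine intervalIntegral.integral_hasDerivAt_right (hI1 u hu0.le hut)
      ((Real.continuous_exp.comp (continuous_const.mul continuous_id)).measurable.mul hFm).stronglyMeasurable.stronglyMeasurableAtFilter ?_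
    exact ((Real.continuous_exp.comp (continuous_const.mul continuous_id)).continuousAt).mul (hd u hu0).continuousAt
  have hA0 : ∀ u, 0 ≤ u → 0 ≤ A u := by
    intro u hu
    apply intervalIntegral.integral_nonneg_of_ae_restrict hu
    have h0 : ∀ᵐ (x:ℝ) ∂(volume.restrict (Icc 0 u)), x ≠ 0 := by
      refine ae_restrict_of_ae ?_
      rw [ae_iff]
      simp only [ne_eq, not_not]
      simpa using measure_singleton (0:ℝ)
    filter_upwards [ae_restrict_mem measurableSet_Icc, h0] with x hx hx0
    have hx1 : 0 < x := lt_of_le_of_ne hx.1 (Ne.symm hx0)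
    exact mul_nonneg (Real.exp_pos _).le (hpos x hx1).le
  have hAle : ∀ u, 0 < u → u ≤ t → A u ≤ u * (M * G u) := by
    intro u hu0 hut
    have hint : IntegrableOn (fun x => Real.exp (s * x) * G x) (Ioc 0 u) := by
      rw [← intervalIntegrable_iff_integrableOn_Ioc_of_le hu0.le]
      exact hI1 u hu0.le hut
    have : A u = ∫ x in Ioc (0:ℝ) u, Real.exp (s * x) * G x :=
      intervalIntegral.integral_of_le hu0.le
    rw [this]
    calc (∫ x in Ioc (0:ℝ) u, Real.exp (s * x) * G x)
        ≤ ∫ _x in Ioc (0:ℝ) u, M * G u := by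
          refine setIntegral_mono_on hint (integrableOn_const ?_) measurableSet_Ioc ?_
          · simp [Real.volume_Ioc]
          · intro x hx
            refine mul_le_mul (hMx x hx.1.le (hx.2.trans hut)) ?_ (hpos x hx.1).le
              (by linarith)
            exact hmono hx.1 hu0 hx.2
      _ = u * (M * G u) := by
          simp [Real.volume_Ioc, ENNReal.toReal_ofReal hu0.le, smul_eq_mul, hu0.le]
  have hTG : ∀ u, 0 < u → T u * G u ≤ 1 := by
    intro u hu
    have := aux_mul_log (hpos u hu)
    have := hpos u hu
    simp only [hT]
    nlinarith
  have hT0 : ∀ u, 0 < u → 0 ≤ T u := by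
    intro u hu
    simp only [hT, neg_nonneg]
    exact Real.log_nonpos (hpos u hu).le (hle u hu)
  -- tendsto of T * A at 0+
  have hM0 : (0:ℝ) ≤ M := by linarith
  have tend0 : Tendsto (fun u => T u * A u) (nhdsWithin 0 (Ioi 0)) (nhds 0) := by
    have hup : Tendsto (fun u : ℝ => M * u) (nhdsWithin 0 (Ioi 0)) (nhds 0) := by
      have h : Tendsto (fun u : ℝ => M * u) (nhds 0) (nhds (M * 0)) :=
        (continuous_const.mul continuous_id).tendsto 0
      rw [mul_zero] at h
      exact h.mono_left nhdsWithin_le_nhds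
    refine tendsto_of_tendsto_of_tendsto_of_le_of_le' tendsto_const_nhds hup ?_ ?_
    · filter_upwards [Ioo_mem_nhdsGT_of_mem (⟨le_rfl, ht⟩ : (0:ℝ) ∈ Ico 0 t)] with u hu
      exact mul_nonneg (hT0 u hu.1) (hA0 u hu.1.le)
    · filter_upwards [Ioo_mem_nhdsGT_of_mem (⟨le_rfl, ht⟩ : (0:ℝ) ∈ Ico 0 t)] with u hu
      calc T u * A u ≤ T u * (u * (M * G u)) :=
            mul_le_mul_of_nonneg_left (hAle u hu.1 hu.2.le) (hT0 u hu.1)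
        _ = (u * M) * (T u * G u) := by ring
        _ ≤ (u * M) * 1 := by
            exact mul_le_mul_of_nonneg_left (hTG u hu.1) (mul_nonneg hu.1.le hM0)
        _ = M * u := by ring
  -- integrability of the two derivative pieces
  have int1 : IntervalIntegrable (fun u => T u * (Real.exp (s * u) * G u)) volume 0 t := by
    refine aux_II ht.le (((hFm.log.neg).mul
      ((Real.continuous_exp.comp (continuous_const.mul continuous_id)).measurable.mul hFm)).aestronglyMeasurable.restrict) (C := M) ?_
    intro x hx
    have h1 : 0 ≤ T x * G x := mul_nonneg (hT0 x hx.1) (hpos x hx.1).le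
    have h2 := hTG x hx.1
    have h3 := hMx x hx.1.le hx.2
    rw [abs_of_nonneg (by nlinarith [(Real.exp_pos (s*x)).le] : (0:ℝ) ≤ T x * (Real.exp (s*x) * G x))]
    nlinarith [Real.exp_pos (s*x)]
  have hAcont : ContinuousOn A (Icc 0 t) := by
    have := intervalIntegral.continuousOn_primitive_interval
      (f := fun x => Real.exp (s * x) * G x) (a := (0:ℝ)) (b := t) (μ := volume) ?_
    · rwa [uIcc_of_le ht.le] at this
    · rw [uIcc_of_le ht.le, ← intervalIntegrable_iff_integrableOn_Icc_of_le ht.le]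
      exact hI1 t ht.le le_rfl
  have int2 : IntervalIntegrable (fun u => (g u / G u) * A u) volume 0 t := by
    rw [intervalIntegrable_iff_integrableOn_Ioc_of_le ht.le]
    have hbound : IntegrableOn (fun u => (t * M) * g u) (Ioc 0 t) := Ig.const_mul _
    refine Integrable.mono' hbound ?_ ?_
    · exact ((hfm.div hFm).aestronglyMeasurable.restrict).mul
        ((hAcont.mono Ioc_subset_Icc_self).aestronglyMeasurable measurableSet_Ioc)
    · filter_upwards [ae_restrict_mem measurableSet_Ioc] with u hu
      have hgpos := hf0 u hu.1
      have hGpos := hpos u hu.1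
      have hdiv : 0 ≤ g u / G u := div_nonneg hgpos hGpos.le
      have h1 : 0 ≤ (g u / G u) * A u := mul_nonneg hdiv (hA0 u hu.1.le)
      rw [Real.norm_eq_abs, abs_of_nonneg h1]
      calc (g u / G u) * A u ≤ (g u / G u) * (u * (M * G u)) :=
            mul_le_mul_of_nonneg_left (hAle u hu.1 hu.2) hdiv
        _ = u * (M * g u) := by field_simp
        _ ≤ t * (M * g u) :=
            mul_le_mul_of_nonneg_right hu.2 (mul_nonneg hM0 hgpos)
        _ = (t * M) * g u := by ring
  -- identity: Ttilde of G in terms of the primitive A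
  have hTtilde : ∀ u : ℝ, Ttilde s G u = Real.exp (-(s * u)) * A u := by
    intro u
    rw [Ttilde, hA]
    rw [← intervalIntegral.integral_const_mul]
    refine intervalIntegral.integral_congr fun x _ => ?_
    rw [← mul_assoc, ← Real.exp_add]
    congr 2
    ring
  -- integration by parts via FTC
  have ibp : (∫ u in (0:ℝ)..t, (T u * (Real.exp (s * u) * G u) - (g u / G u) * A u))
      = T t * A t - 0 := by
    refine intervalIntegral.integral_eq_sub_of_hasDerivAt_of_tendsto ht ?_ (int1.sub int2)
      tend0 ?_
    · intro u hu
      have h1 := hd u hu.1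
      have hT' : HasDerivAt (fun y => -Real.log (G y)) (-(g u / G u)) u :=
        (h1.log (hpos u hu.1).ne').neg
      have h2 := hT'.mul (hAd u hu.1 hu.2.le)
      have h3 : HasDerivAt (fun y => T y * A y)
          (-(g u / G u) * A u + (-Real.log (G u)) * (Real.exp (s * u) * G u)) u := by
        exact h2
      refine h3.congr_deriv ?_
      show _ = -Real.log (G u) * (Real.exp (s * u) * G u) - g u / G u * A u
      ring
    · have hTc : ContinuousAt (fun u => T u * A u) t := by
        have hc1 : ContinuousAt (fun u => T u) t := by
          simp only [hT]
          exact ((Real.continuousAt_log (hpos t ht).ne').comp (hd t ht).continuousAt).neg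
        exact hc1.mul (hAd t ht le_rfl).continuousAt
      exact hTc.tendsto.mono_left nhdsWithin_le_nhds
  set Bt : ℝ := ∫ u in (0:ℝ)..t, T u * (Real.exp (s * u) * G u) with hBt
  have key2 : (∫ u in (0:ℝ)..t, (g u / G u) * A u) = Bt - T t * A t := by
    rw [intervalIntegral.integral_sub int1 int2] at ibp
    rw [hBt]
    linarith
  -- LHS computation
  have hLHS : Ttilde s (Fn (n + 1)) t = Real.exp (-(s * t)) * (A t + Bt) := by
    rw [Ttilde]
    calc (∫ x in (0:ℝ)..t, Real.exp (-(s * (t - x))) * Fn (n + 1) x)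
        = ∫ x in (0:ℝ)..t, Real.exp (-(s * t)) *
            (Real.exp (s * x) * G x + T x * (Real.exp (s * x) * G x)) := by
          refine intervalIntegral.integral_congr fun x _ => ?_
          rw [hFrec n hn x]
          rw [show -(s * (t - x)) = -(s * t) + s * x by ring, Real.exp_add]
          simp only [hT]
          ring
      _ = Real.exp (-(s * t)) * ∫ x in (0:ℝ)..t,
            (Real.exp (s * x) * G x + T x * (Real.exp (s * x) * G x)) :=
          intervalIntegral.integral_const_mul _ _
      _ = Real.exp (-(s * t)) * (A t + Bt) := by
          rw [intervalIntegral.integral_add (hI1 t ht.le le_rfl) int1]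
  -- second term on the RHS
  have hsecond : (∫ u in (0:ℝ)..t, Real.exp (-(s * (t - u))) * ((g u / G u) * Ttilde s G u))
      = Real.exp (-(s * t)) * ∫ u in (0:ℝ)..t, (g u / G u) * A u := by
    rw [← intervalIntegral.integral_const_mul]
    refine intervalIntegral.integral_congr fun u _ => ?_
    rw [hTtilde u]
    have e1 : Real.exp (-(s * (t - u))) * Real.exp (-(s * u)) = Real.exp (-(s * t)) := by
      rw [← Real.exp_add]; congr 1; ring
    calc Real.exp (-(s * (t - u))) * ((g u / G u) * (Real.exp (-(s * u)) * A u))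
        = (Real.exp (-(s * (t - u))) * Real.exp (-(s * u))) * ((g u / G u) * A u) := by ring
      _ = Real.exp (-(s * t)) * ((g u / G u) * A u) := by rw [e1]
  rw [hLHS, hsecond, hTtilde t, key2]
  simp only [hT]
  ring
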